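/- Let A ∈ ℝ^{m×n}, a ∈ ℝ^m, b ∈ ℝ^n, c ∈ ℝ, and r > 0; let υ ∈ ℝ and k ≥ 0. Then the robust quadratic inequality ‖Az + a‖₂² + bᵀz + c ≤ k·zᵀz + υ holds for all z ∈ ℝ^n with ‖z‖₂ ≤ r if and only if there exists λ ≥ 0 such that the block matrix [[I_m, a, A], [aᵀ, −c + υ − λr², −(1/2)bᵀ], [Aᵀ, −(1/2)b, (k+λ)I_n]] is positive semidefinite. -/

import Mathlib

open Matrix

/-- The block matrix
`[[I_m, a, A], [aᵀ, −c + υ − λr², −(1/2)bᵀ], [Aᵀ, −(1/2)b, (k+λ)I_n]]`. -/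
noncomputable def quadBlockMat {m n : ℕ} (A : Matrix (Fin m) (Fin n) ℝ) (a : Fin m → ℝ)
    (b : Fin n → ℝ) (c υ lam r k : ℝ) :
    Matrix (Fin m ⊕ (Unit ⊕ Fin n)) (Fin m ⊕ (Unit ⊕ Fin n)) ℝ :=
  Matrix.of fun i j =>
    match i, j with
    | Sum.inl i, Sum.inl j => if i = j then 1 else 0
    | Sum.inl i, Sum.inr (Sum.inl _) => a i
    | Sum.inl i, Sum.inr (Sum.inr j) => A i j
    | Sum.inr (Sum.inl _), Sum.inl j => a j
    | Sum.inr (Sum.inl _), Sum.inr (Sum.inl _) => -c + υ - lam * r ^ 2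
    | Sum.inr (Sum.inl _), Sum.inr (Sum.inr j) => -(1 / 2) * b j
    | Sum.inr (Sum.inr i), Sum.inl j => A j i
    | Sum.inr (Sum.inr i), Sum.inr (Sum.inl _) => -(1 / 2) * b i
    | Sum.inr (Sum.inr i), Sum.inr (Sum.inr j) => if i = j then k + lam else 0

/-! ### Auxiliary scalar lemmas -/

lemma exists_unit_ortho (D1 D2 : ℝ) :
    ∃ u1 u2 : ℝ, u1 ^ 2 + u2 ^ 2 = 1 ∧ u1 * D1 + u2 * D2 = 0 := by
  by_cases hD : D1 = 0 ∧ D2 = 0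
  · exact ⟨1, 0, by norm_num, by simp [hD.1, hD.2]⟩
  · have hpos : 0 < D1 ^ 2 + D2 ^ 2 := by
      rcases not_and_or.mp hD with h | h
      · nlinarith [sq_nonneg D2, mul_pos (abs_pos.mpr h) (abs_pos.mpr h), sq_abs D1]
      · nlinarith [sq_nonneg D1, mul_pos (abs_pos.mpr h) (abs_pos.mpr h), sq_abs D2]
    have hs : Real.sqrt (D1 ^ 2 + D2 ^ 2) ^ 2 = D1 ^ 2 + D2 ^ 2 := Real.sq_sqrt hpos.le
    have hsne : Real.sqrt (D1 ^ 2 + D2 ^ 2) ≠ 0 := by positivity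
    refine ⟨D2 / Real.sqrt (D1 ^ 2 + D2 ^ 2), -D1 / Real.sqrt (D1 ^ 2 + D2 ^ 2), ?_, ?_⟩
    · field_simp
      linarith [hs]
    · field_simp
      ring

lemma exists_half_angle (u1 u2 : ℝ) (hu : u1 ^ 2 + u2 ^ 2 = 1) :
    ∃ α β : ℝ, α ^ 2 + β ^ 2 = 1 ∧ α ^ 2 - β ^ 2 = u1 ∧ 2 * (α * β) = u2 := by
  have hu1le : u1 ≤ 1 := by nlinarith [sq_nonneg u2]
  have hu1ge : -1 ≤ u1 := by nlinarith [sq_nonneg u2, sq_nonneg u1]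
  by_cases hα : (1 + u1) / 2 = 0
  · refine ⟨0, 1, by norm_num, by nlinarith, ?_⟩
    have h1 : u1 = -1 := by linarith
    have h2 : u2 = 0 := by nlinarith
    simp [h2]
  · have hαpos : 0 < (1 + u1) / 2 := lt_of_le_of_ne (by linarith) (Ne.symm hα)
    set α := Real.sqrt ((1 + u1) / 2) with hαdef
    have hα2 : α ^ 2 = (1 + u1) / 2 := Real.sq_sqrt hαpos.le
    have hαne : α ≠ 0 := by positivity
    refine ⟨α, u2 / (2 * α), ?_, ?_, ?_⟩
    · field_simp
      nlinarith [hα2]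
    · field_simp
      nlinarith [hα2]
    · field_simp

lemma pick_scale (m1 m2 c1 c2 : ℝ) (hortho : c1 * m2 = c2 * m1) :
    ∃ s : ℝ, 0 ≤ s ∧ ((s * (m1 + c1) = 2 * m1 ∧ s * (m2 + c2) = 2 * m2) ∨
      (s * (m1 - c1) = 2 * m1 ∧ s * (m2 - c2) = 2 * m2)) := by
  by_cases hm : m1 = 0 ∧ m2 = 0
  · exact ⟨0, le_refl _, Or.inl ⟨by rw [hm.1]; ring, by rw [hm.2]; ring⟩⟩
  · obtain ⟨σ, hσ1, hσ2⟩ : ∃ σ : ℝ, m1 + c1 = σ * m1 ∧ m2 + c2 = σ * m2 := by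
      rcases not_and_or.mp hm with h | h
      · refine ⟨(m1 + c1) / m1, by field_simp, ?_⟩
        field_simp
        nlinarith [hortho]
      · refine ⟨(m2 + c2) / m2, ?_, by field_simp⟩
        field_simp
        nlinarith [hortho]
    rcases le_or_gt 1 σ with hσ | hσ
    · have : (0:ℝ) < σ := by linarith
      refine ⟨2 / σ, by positivity, Or.inl ⟨?_, ?_⟩⟩
      · rw [hσ1]; field_simp
      · rw [hσ2]; field_simp
    · have h2 : (0:ℝ) < 2 - σ := by linarith
      have hσ1' : m1 - c1 = (2 - σ) * m1 := by linarith [hσ1]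
      have hσ2' : m2 - c2 = (2 - σ) * m2 := by linarith [hσ2]
      refine ⟨2 / (2 - σ), by positivity, Or.inr ⟨?_, ?_⟩⟩
      · rw [hσ1']; field_simp
      · rw [hσ2']; field_simp

lemma div_le_div_cross {px qx py qy : ℝ} (hqx : qx < 0) (hqy : 0 < qy)
    (h : py * qx ≤ px * qy) : px / qx ≤ py / qy := by
  have heq : px / qx - py / qy = (px * qy - qx * py) / (qx * qy) :=
    div_sub_div px py (ne_of_lt hqx) (ne_of_gt hqy)
  have hnum : 0 ≤ px * qy - qx * py := by linarith
  have hden : qx * qy < 0 := mul_neg_of_neg_of_pos hqx hqy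
  have h2 : (px * qy - qx * py) / (qx * qy) ≤ 0 := div_nonpos_of_nonneg_of_nonpos hnum hden.le
  linarith [heq ▸ h2]

/-! ### The abstract S-lemma (via Dines' convexity theorem) -/

section SLemma

variable {V : Type*} [AddCommGroup V] [Module ℝ V]

variable (P Q : V → V → ℝ)

/-- Expansion property of a quadratic form given by a symmetric bilinear map. -/
def ExpandQF : Prop := ∀ (α β : ℝ) (x y : V), P (α • x + β • y) (α • x + β • y)
        = α ^ 2 * P x x + 2 * (α * β) * P x y + β ^ 2 * P y y

variable {P Q}

/-- Dines' theorem, addition step: the joint range of two quadratic forms is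
closed under addition. -/
lemma dines_add (hP : ExpandQF P) (hQ : ExpandQF Q) (x y : V) :
    ∃ w : V, P w w = P x x + P y y ∧ Q w w = Q x x + Q y y := by
  obtain ⟨u1, u2, hu, hortho⟩ := exists_unit_ortho
    (((P x x - P y y) / 2) * ((Q x x + Q y y) / 2) - ((Q x x - Q y y) / 2) * ((P x x + P y y) / 2))
    (P x y * ((Q x x + Q y y) / 2) - Q x y * ((P x x + P y y) / 2))
  obtain ⟨α, β, hab1, hab2, hab3⟩ := exists_half_angle u1 u2 hu
  have he1 : P (α • x + β • y) (α • x + β • y)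
      = (P x x + P y y) / 2 + (u1 * ((P x x - P y y) / 2) + u2 * P x y) := by
    rw [hP, ← hab2, ← hab3]; linear_combination ((P x x + P y y) / 2) * hab1
  have hf1 : Q (α • x + β • y) (α • x + β • y)
      = (Q x x + Q y y) / 2 + (u1 * ((Q x x - Q y y) / 2) + u2 * Q x y) := by
    rw [hQ, ← hab2, ← hab3]; linear_combination ((Q x x + Q y y) / 2) * hab1
  have he2 : P ((-β) • x + α • y) ((-β) • x + α • y)
      = (P x x + P y y) / 2 - (u1 * ((P x x - P y y) / 2) + u2 * P x y) := by
    rw [hP, ← hab2, ← hab3]; linear_combination ((P x x + P y y) / 2) * hab1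
  have hf2 : Q ((-β) • x + α • y) ((-β) • x + α • y)
      = (Q x x + Q y y) / 2 - (u1 * ((Q x x - Q y y) / 2) + u2 * Q x y) := by
    rw [hQ, ← hab2, ← hab3]; linear_combination ((Q x x + Q y y) / 2) * hab1
  obtain ⟨s, hs, hcase⟩ := pick_scale ((P x x + P y y) / 2) ((Q x x + Q y y) / 2)
    (u1 * ((P x x - P y y) / 2) + u2 * P x y) (u1 * ((Q x x - Q y y) / 2) + u2 * Q x y)
    (by linear_combination hortho)
  have hscaleP : ∀ w : V, P (Real.sqrt s • w + (0:ℝ) • w) (Real.sqrt s • w + (0:ℝ) • w)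
      = s * P w w := by
    intro w; rw [hP, Real.sq_sqrt hs]; ring
  have hscaleQ : ∀ w : V, Q (Real.sqrt s • w + (0:ℝ) • w) (Real.sqrt s • w + (0:ℝ) • w)
      = s * Q w w := by
    intro w; rw [hQ, Real.sq_sqrt hs]; ring
  rcases hcase with ⟨h1, h2⟩ | ⟨h1, h2⟩
  · refine ⟨Real.sqrt s • (α • x + β • y) + (0:ℝ) • (α • x + β • y), ?_, ?_⟩
    · rw [hscaleP, he1]; linarith [h1]
    · rw [hscaleQ, hf1]; linarith [h2]
  · refine ⟨Real.sqrt s • ((-β) • x + α • y) + (0:ℝ) • ((-β) • x + α • y), ?_, ?_⟩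
    · rw [hscaleP, he2]; linarith [h1]
    · rw [hscaleQ, hf2]; linarith [h2]

/-- Cross inequality for the S-lemma. -/
lemma s_cross (hP : ExpandQF P) (hQ : ExpandQF Q)
    (hyp : ∀ x : V, 0 ≤ Q x x → 0 ≤ P x x)
    {x y : V} (hx : Q x x < 0) (hy : 0 < Q y y) :
    P y y * Q x x ≤ P x x * Q y y := by
  have hd : (0:ℝ) < Q y y - Q x x := by linarith
  set μ : ℝ := Q y y / (Q y y - Q x x) with hμ
  have hμ0 : 0 ≤ μ := by positivity
  have hμ1 : 0 ≤ 1 - μ := by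
    rw [hμ, sub_nonneg, div_le_one hd]; linarith
  have hxs1 : P (Real.sqrt μ • x + (0:ℝ) • x) (Real.sqrt μ • x + (0:ℝ) • x) = μ * P x x := by
    rw [hP, Real.sq_sqrt hμ0]; ring
  have hxs2 : Q (Real.sqrt μ • x + (0:ℝ) • x) (Real.sqrt μ • x + (0:ℝ) • x) = μ * Q x x := by
    rw [hQ, Real.sq_sqrt hμ0]; ring
  have hys1 : P (Real.sqrt (1-μ) • y + (0:ℝ) • y) (Real.sqrt (1-μ) • y + (0:ℝ) • y)
      = (1-μ) * P y y := by rw [hP, Real.sq_sqrt hμ1]; ring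
  have hys2 : Q (Real.sqrt (1-μ) • y + (0:ℝ) • y) (Real.sqrt (1-μ) • y + (0:ℝ) • y)
      = (1-μ) * Q y y := by rw [hQ, Real.sq_sqrt hμ1]; ring
  obtain ⟨w, hw1, hw2⟩ := dines_add hP hQ
    (Real.sqrt μ • x + (0:ℝ) • x) (Real.sqrt (1-μ) • y + (0:ℝ) • y)
  rw [hxs1, hys1] at hw1
  rw [hxs2, hys2] at hw2
  have hq0 : Q w w = 0 := by
    rw [hw2, hμ]; field_simp; ring
  have hp0 : 0 ≤ P w w := hyp w (le_of_eq hq0.symm)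
  rw [hw1, hμ] at hp0
  have h0 : 0 ≤ (Q y y / (Q y y - Q x x) * P x x
      + (1 - Q y y / (Q y y - Q x x)) * P y y) * (Q y y - Q x x) := mul_nonneg hp0 hd.le
  have heq2 : (Q y y / (Q y y - Q x x) * P x x
      + (1 - Q y y / (Q y y - Q x x)) * P y y) * (Q y y - Q x x)
      = Q y y * P x x - Q x x * P y y := by
    field_simp
    ring
  rw [heq2] at h0
  linarith

/-- The homogeneous S-lemma. -/
theorem s_lemma (hP : ExpandQF P) (hQ : ExpandQF Q)
    (hyp : ∀ x : V, 0 ≤ Q x x → 0 ≤ P x x)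
    (x₀ : V) (hx₀ : 0 < Q x₀ x₀) :
    ∃ lam : ℝ, 0 ≤ lam ∧ ∀ x : V, lam * Q x x ≤ P x x := by
  by_cases hneg : ∃ x1 : V, Q x1 x1 < 0 ∧ P x1 x1 < 0
  · obtain ⟨x1, hq1, hp1⟩ := hneg
    set R : Set ℝ := {s | ∃ x : V, Q x x < 0 ∧ s = P x x / Q x x} with hR
    have hmem : P x1 x1 / Q x1 x1 ∈ R := ⟨x1, hq1, rfl⟩
    have hne : R.Nonempty := ⟨_, hmem⟩
    have hub : ∀ y : V, 0 < Q y y → ∀ s ∈ R, s ≤ P y y / Q y y := by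
      rintro y hy s ⟨x, hx, rfl⟩
      exact div_le_div_cross hx hy (s_cross hP hQ hyp hx hy)
    have hbdd : BddAbove R := ⟨P x₀ x₀ / Q x₀ x₀, fun s hs => hub x₀ hx₀ s hs⟩
    refine ⟨sSup R, ?_, ?_⟩
    · have h1 : 0 < P x1 x1 / Q x1 x1 := div_pos_of_neg_of_neg hp1 hq1
      exact le_trans h1.le (le_csSup hbdd hmem)
    · intro x
      rcases lt_trichotomy (Q x x) 0 with h | h | h
      · have hle : P x x / Q x x ≤ sSup R := le_csSup hbdd ⟨x, h, rfl⟩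
        have := mul_le_mul_of_nonpos_right hle h.le
        rwa [div_mul_cancel₀ _ (ne_of_lt h)] at this
      · rw [h, mul_zero]
        exact hyp x (le_of_eq h.symm)
      · have hle : sSup R ≤ P x x / Q x x := csSup_le hne (hub x h)
        have := mul_le_mul_of_nonneg_right hle h.le
        rwa [div_mul_cancel₀ _ (ne_of_gt h)] at this
  · push_neg at hneg
    refine ⟨0, le_refl _, fun x => ?_⟩
    rw [zero_mul]
    rcases le_or_gt 0 (Q x x) with h | h
    · exact hyp x h
    · exact hneg x h

end SLemma

/-! ### The block matrix and its quadratic form -/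

lemma quadBlockMat_isHermitian {m n : ℕ} (A : Matrix (Fin m) (Fin n) ℝ) (a : Fin m → ℝ)
    (b : Fin n → ℝ) (c υ lam r k : ℝ) :
    (quadBlockMat A a b c υ lam r k).IsHermitian := by
  rw [Matrix.IsHermitian]
  ext i j
  rcases i with i | i | i <;> rcases j with j | j | j <;>
    simp [quadBlockMat, Matrix.conjTranspose_apply, eq_comm]

lemma dot_swap {m n : ℕ} (A : Matrix (Fin m) (Fin n) ℝ) (u : Fin m → ℝ) (z : Fin n → ℝ) :
    ∑ i, z i * (∑ j, A j i * u j) = ∑ j, u j * A.mulVec z j := by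
  simp only [Matrix.mulVec, dotProduct, Finset.mul_sum]
  rw [Finset.sum_comm]
  exact Finset.sum_congr rfl fun j _ => Finset.sum_congr rfl fun i _ => by ring

lemma quadForm_formula {m n : ℕ} (A : Matrix (Fin m) (Fin n) ℝ) (a : Fin m → ℝ)
    (b : Fin n → ℝ) (c υ lam r k : ℝ) (v : Fin m ⊕ (Unit ⊕ Fin n) → ℝ) :
    v ⬝ᵥ (quadBlockMat A a b c υ lam r k).mulVec v
      = (∑ i, (v (Sum.inl i) + v (Sum.inr (Sum.inl ())) * a i
          + A.mulVec (fun j => v (Sum.inr (Sum.inr j))) i) ^ 2)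
        + ((k * ((fun j => v (Sum.inr (Sum.inr j))) ⬝ᵥ (fun j => v (Sum.inr (Sum.inr j))))
            + (υ - c) * v (Sum.inr (Sum.inl ())) ^ 2
            - v (Sum.inr (Sum.inl ())) * (b ⬝ᵥ (fun j => v (Sum.inr (Sum.inr j))))
            - (A.mulVec (fun j => v (Sum.inr (Sum.inr j))) + v (Sum.inr (Sum.inl ())) • a) ⬝ᵥ
              (A.mulVec (fun j => v (Sum.inr (Sum.inr j))) + v (Sum.inr (Sum.inl ())) • a))
          - lam * (r ^ 2 * v (Sum.inr (Sum.inl ())) ^ 2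
            - (fun j => v (Sum.inr (Sum.inr j))) ⬝ᵥ (fun j => v (Sum.inr (Sum.inr j))))) := by
  set u : Fin m → ℝ := fun i => v (Sum.inl i) with hu
  set t : ℝ := v (Sum.inr (Sum.inl ())) with ht
  set z : Fin n → ℝ := fun j => v (Sum.inr (Sum.inr j)) with hz
  set w : Fin m → ℝ := A.mulVec z with hw
  have hmv1 : ∀ i, (quadBlockMat A a b c υ lam r k).mulVec v (Sum.inl i)
      = u i + a i * t + w i := by
    intro i
    simp only [Matrix.mulVec, dotProduct, Fintype.sum_sum_type, quadBlockMat,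
      Matrix.of_apply, Fintype.sum_unique, ite_mul, one_mul, zero_mul,
      Finset.sum_ite_eq, Finset.mem_univ, if_true, hw]
    ring
  have hmv2 : (quadBlockMat A a b c υ lam r k).mulVec v (Sum.inr (Sum.inl ()))
      = (∑ j, a j * u j) + ((-c + υ - lam * r ^ 2) * t + ∑ j, (-(1/2) * b j) * z j) := by
    simp only [Matrix.mulVec, dotProduct, Fintype.sum_sum_type, quadBlockMat,
      Matrix.of_apply, Fintype.sum_unique]
    rfl
  have hmv3 : ∀ i, (quadBlockMat A a b c υ lam r k).mulVec v (Sum.inr (Sum.inr i))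
      = (∑ j, A j i * u j) + (-(1/2) * b i * t + (k + lam) * z i) := by
    intro i
    simp only [Matrix.mulVec, dotProduct, Fintype.sum_sum_type, quadBlockMat,
      Matrix.of_apply, Fintype.sum_unique, ite_mul, zero_mul,
      Finset.sum_ite_eq, Finset.mem_univ, if_true]
    rfl
  have hlhs : v ⬝ᵥ (quadBlockMat A a b c υ lam r k).mulVec v
      = (∑ i, u i * (u i + a i * t + w i))
        + (t * ((∑ j, a j * u j) + ((-c + υ - lam * r ^ 2) * t + ∑ j, (-(1/2) * b j) * z j))
          + ∑ i, z i * ((∑ j, A j i * u j) + (-(1/2) * b i * t + (k + lam) * z i))) := by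
    simp only [dotProduct, Fintype.sum_sum_type, Fintype.sum_unique]
    rw [hmv2]
    congr 1
    · exact Finset.sum_congr rfl fun i _ => by rw [hmv1]
    · congr 1
      exact Finset.sum_congr rfl fun i _ => by rw [hmv3]
  rw [hlhs]
  have e1 : ∑ i, u i * (u i + a i * t + w i)
      = (∑ i, u i * u i) + t * (∑ i, u i * a i) + (∑ i, u i * w i) := by
    rw [Finset.sum_congr rfl (fun i _ => show u i * (u i + a i * t + w i)
      = u i * u i + t * (u i * a i) + u i * w i by ring)]
    rw [Finset.sum_add_distrib, Finset.sum_add_distrib, ← Finset.mul_sum]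
  have e2 : ∑ j, a j * u j = ∑ i, u i * a i :=
    Finset.sum_congr rfl fun i _ => by ring
  have e3 : ∑ j, (-(1/2) * b j) * z j = -(1/2) * ∑ j, b j * z j := by
    rw [Finset.mul_sum]
    exact Finset.sum_congr rfl fun i _ => by ring
  have e4 : ∑ i, z i * ((∑ j, A j i * u j) + (-(1/2) * b i * t + (k + lam) * z i))
      = (∑ j, u j * w j) + ((-(1/2) * t) * (∑ i, b i * z i) + (k + lam) * ∑ i, z i * z i) := by
    rw [Finset.sum_congr rfl (fun i _ => show
      z i * ((∑ j, A j i * u j) + (-(1/2) * b i * t + (k + lam) * z i))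
      = z i * (∑ j, A j i * u j) + ((-(1/2) * t) * (b i * z i) + (k + lam) * (z i * z i))
      from by ring)]
    rw [Finset.sum_add_distrib, Finset.sum_add_distrib, ← Finset.mul_sum, ← Finset.mul_sum,
      dot_swap]
  have e5 : ∑ i, (u i + t * a i + w i) ^ 2
      = (∑ i, u i * u i) + (t * t) * (∑ i, a i * a i) + (∑ i, w i * w i)
        + (2 * t) * (∑ i, u i * a i) + 2 * (∑ i, u i * w i) + (2 * t) * (∑ i, a i * w i) := by
    rw [Finset.sum_congr rfl (fun i _ => show (u i + t * a i + w i) ^ 2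
      = u i * u i + (t * t) * (a i * a i) + w i * w i + (2 * t) * (u i * a i)
        + 2 * (u i * w i) + (2 * t) * (a i * w i) from by ring)]
    rw [Finset.sum_add_distrib, Finset.sum_add_distrib, Finset.sum_add_distrib,
      Finset.sum_add_distrib, Finset.sum_add_distrib, ← Finset.mul_sum, ← Finset.mul_sum,
      ← Finset.mul_sum, ← Finset.mul_sum]
  have e6 : (w + t • a) ⬝ᵥ (w + t • a)
      = (∑ i, w i * w i) + (t * t) * (∑ i, a i * a i) + (2 * t) * (∑ i, a i * w i) := by
    simp only [dotProduct, Pi.add_apply, Pi.smul_apply, smul_eq_mul]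
    rw [Finset.sum_congr rfl (fun i _ => show (w i + t * a i) * (w i + t * a i)
      = w i * w i + (t * t) * (a i * a i) + (2 * t) * (a i * w i) from by ring)]
    rw [Finset.sum_add_distrib, Finset.sum_add_distrib, ← Finset.mul_sum, ← Finset.mul_sum]
  have e7 : z ⬝ᵥ z = ∑ i, z i * z i := rfl
  have e8 : b ⬝ᵥ z = ∑ i, b i * z i := rfl
  rw [e1, e2, e3, e4, e5, e6, e7, e8]
  ring

/-! ### The concrete bilinear forms -/

/-- The bilinear form of the homogenized robust constraint. -/
noncomputable def Pbil {m n : ℕ} (A : Matrix (Fin m) (Fin n) ℝ) (a : Fin m → ℝ) (b : Fin n → ℝ)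
    (c υ k : ℝ) (x y : ℝ × (Fin n → ℝ)) : ℝ :=
  k * (x.2 ⬝ᵥ y.2) + (υ - c) * (x.1 * y.1)
    - (x.1 * (b ⬝ᵥ y.2) + y.1 * (b ⬝ᵥ x.2)) / 2
    - (A.mulVec x.2 + x.1 • a) ⬝ᵥ (A.mulVec y.2 + y.1 • a)

/-- The bilinear form of the homogenized ball constraint. -/
def Qbil {n : ℕ} (r : ℝ) (x y : ℝ × (Fin n → ℝ)) : ℝ :=
  r ^ 2 * (x.1 * y.1) - x.2 ⬝ᵥ y.2

lemma expand_Qbil {n : ℕ} (r : ℝ) : ExpandQF (Qbil (n := n) r) := by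
  intro α β x y
  simp only [Qbil, Prod.smul_fst, Prod.smul_snd, Prod.fst_add, Prod.snd_add, smul_eq_mul,
    dotProduct_add, add_dotProduct, smul_dotProduct,
    dotProduct_smul, smul_eq_mul, dotProduct_comm y.2 x.2]
  ring

lemma expand_Pbil {m n : ℕ} (A : Matrix (Fin m) (Fin n) ℝ) (a : Fin m → ℝ) (b : Fin n → ℝ)
    (c υ k : ℝ) : ExpandQF (Pbil A a b c υ k) := by
  intro α β x y
  simp only [Pbil, Prod.smul_fst, Prod.smul_snd, Prod.fst_add, Prod.snd_add,
    Matrix.mulVec_add, Matrix.mulVec_smul, smul_eq_mul,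
    dotProduct_add, add_dotProduct, smul_dotProduct,
    dotProduct_smul, smul_eq_mul,
    dotProduct_comm y.2 x.2, dotProduct_comm (A.mulVec y.2) (A.mulVec x.2),
    dotProduct_comm (A.mulVec y.2) a, dotProduct_comm a (A.mulVec x.2),
    dotProduct_comm y.2 b]
  ring

/-! ### Main theorem -/

/-- **Proposition 3 (exact SDP reformulation of the quadratic robust satisficing constraint).**
For `r > 0` and `k ≥ 0`, the robust inequality
`‖Az + a‖₂² + bᵀz + c ≤ k·zᵀz + υ` for all `z` with `‖z‖₂ ≤ r`
holds iff there exists `λ ≥ 0` making the block matrix positive semidefinite. -/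
theorem robust_quadratic_sdp_reformulation {m n : ℕ}
    (A : Matrix (Fin m) (Fin n) ℝ) (a : Fin m → ℝ) (b : Fin n → ℝ)
    (c r υ k : ℝ) (hr : 0 < r) (hk : 0 ≤ k) :
    (∀ z : Fin n → ℝ, ∑ i, (z i) ^ 2 ≤ r ^ 2 →
        ∑ i, (A.mulVec z i + a i) ^ 2 + b ⬝ᵥ z + c ≤ k * (z ⬝ᵥ z) + υ)
    ↔ ∃ lam : ℝ, 0 ≤ lam ∧ (quadBlockMat A a b c υ lam r k).PosSemidef := by
  constructor
  · -- forward direction: robust inequality ⇒ SDP feasibility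
    intro H
    have hyp : ∀ x : ℝ × (Fin n → ℝ), 0 ≤ Qbil r x x → 0 ≤ Pbil A a b c υ k x x := by
      rintro ⟨t, z⟩ hq
      simp only [Qbil] at hq
      by_cases ht : t = 0
      · subst ht
        have hzz : z ⬝ᵥ z ≤ 0 := by
          have : (0:ℝ) * 0 = 0 := by ring
          nlinarith [hq]
        have hz0 : z = 0 := by
          rw [← dotProduct_self_eq_zero (v := z)]
          exact le_antisymm hzz (Finset.sum_nonneg fun i _ => mul_self_nonneg (z i))
        subst hz0
        simp [Pbil]
      · have ht2 : (0:ℝ) < t ^ 2 := by positivity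
        set z' : Fin n → ℝ := t⁻¹ • z with hz'
        have hzsum : z ⬝ᵥ z = ∑ i, z i * z i := rfl
        have hz'cons : ∑ i, (z' i) ^ 2 ≤ r ^ 2 := by
          have h1 : ∑ i, (z' i) ^ 2 = t⁻¹ ^ 2 * (z ⬝ᵥ z) := by
            rw [hzsum, Finset.mul_sum]
            exact Finset.sum_congr rfl fun i _ => by
              simp only [hz', Pi.smul_apply, smul_eq_mul]; ring
          have hinv : t⁻¹ ^ 2 * t ^ 2 = 1 := by field_simp
          have hq' : z ⬝ᵥ z ≤ r ^ 2 * t ^ 2 := by nlinarith [hq]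
          rw [h1]
          nlinarith [mul_le_mul_of_nonneg_left hq' (sq_nonneg t⁻¹)]
        have Hz' := H z' hz'cons
        have hAz' : A.mulVec z' = t⁻¹ • A.mulVec z := by
          rw [hz', Matrix.mulVec_smul]
        have hterm : t ^ 2 * (∑ i, (A.mulVec z' i + a i) ^ 2)
            = ∑ i, (A.mulVec z i + t * a i) * (A.mulVec z i + t * a i) := by
          rw [Finset.mul_sum]
          refine Finset.sum_congr rfl fun i _ => ?_
          rw [hAz']
          simp only [Pi.smul_apply, smul_eq_mul]
          field_simp
        have hbz' : b ⬝ᵥ z' = t⁻¹ * (b ⬝ᵥ z) := by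
          rw [hz', dotProduct_smul, smul_eq_mul]
        have hzz' : z' ⬝ᵥ z' = t⁻¹ * (t⁻¹ * (z ⬝ᵥ z)) := by
          rw [hz', smul_dotProduct, dotProduct_smul, smul_eq_mul, smul_eq_mul]
        have hdot' : (A.mulVec z + t • a) ⬝ᵥ (A.mulVec z + t • a)
            = ∑ i, (A.mulVec z i + t * a i) * (A.mulVec z i + t * a i) := by
          simp only [dotProduct, Pi.add_apply, Pi.smul_apply, smul_eq_mul]
        have h1 : t ^ 2 * (t⁻¹ * (b ⬝ᵥ z)) = t * (b ⬝ᵥ z) := by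
          field_simp
        have h2 : t ^ 2 * (t⁻¹ * (t⁻¹ * (z ⬝ᵥ z))) = z ⬝ᵥ z := by
          field_simp
        have hL : t ^ 2 * (∑ i, (A.mulVec z' i + a i) ^ 2 + b ⬝ᵥ z' + c)
            = (∑ i, (A.mulVec z i + t * a i) * (A.mulVec z i + t * a i))
              + t * (b ⬝ᵥ z) + t ^ 2 * c := by
          rw [mul_add, mul_add, hterm, hbz', h1]
        have hR : t ^ 2 * (k * (z' ⬝ᵥ z') + υ) = k * (z ⬝ᵥ z) + t ^ 2 * υ := by
          rw [hzz', mul_add]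
          congr 1
          rw [show t ^ 2 * (k * (t⁻¹ * (t⁻¹ * (z ⬝ᵥ z)))) =
            k * (t ^ 2 * (t⁻¹ * (t⁻¹ * (z ⬝ᵥ z)))) from by ring, h2]
        have hmul := mul_le_mul_of_nonneg_left Hz' ht2.le
        rw [hL, hR] at hmul
        have hPb : Pbil A a b c υ k (t, z) (t, z)
            = (k * (z ⬝ᵥ z) + t ^ 2 * υ)
              - ((∑ i, (A.mulVec z i + t * a i) * (A.mulVec z i + t * a i))
                + t * (b ⬝ᵥ z) + t ^ 2 * c) := by
          simp only [Pbil, hdot']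
          ring
        rw [hPb]
        linarith
    have hslater : 0 < Qbil r ((1:ℝ), (0 : Fin n → ℝ)) ((1:ℝ), (0 : Fin n → ℝ)) := by
      simp only [Qbil, dotProduct_zero]
      nlinarith [hr]
    obtain ⟨lam, hlam, hineq⟩ := s_lemma (expand_Pbil A a b c υ k) (expand_Qbil r) hyp
      ((1:ℝ), (0 : Fin n → ℝ)) hslater
    refine ⟨lam, hlam, Matrix.PosSemidef.of_dotProduct_mulVec_nonneg (quadBlockMat_isHermitian A a b c υ lam r k) fun v => ?_⟩
    have hsv : star v = v := rfl
    rw [hsv, quadForm_formula]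
    set t : ℝ := v (Sum.inr (Sum.inl ())) with htdef
    set z : Fin n → ℝ := fun j => v (Sum.inr (Sum.inr j)) with hzdef
    have hb1 : k * (z ⬝ᵥ z) + (υ - c) * t ^ 2 - t * (b ⬝ᵥ z)
        - (A.mulVec z + t • a) ⬝ᵥ (A.mulVec z + t • a) = Pbil A a b c υ k (t, z) (t, z) := by
      simp only [Pbil]
      ring
    have hb2 : r ^ 2 * t ^ 2 - z ⬝ᵥ z = Qbil r (t, z) (t, z) := by
      simp only [Qbil]
      ring
    rw [hb1, hb2]
    have hsq : 0 ≤ ∑ i, (v (Sum.inl i) + t * a i + A.mulVec z i) ^ 2 :=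
      Finset.sum_nonneg fun i _ => sq_nonneg _
    linarith [hineq (t, z)]
  · -- backward direction: SDP feasibility ⇒ robust inequality
    rintro ⟨lam, hlam, hpsd⟩ z hz
    set v : Fin m ⊕ (Unit ⊕ Fin n) → ℝ :=
      Sum.elim (fun i => -(A.mulVec z i + a i)) (Sum.elim (fun _ => (1:ℝ)) z) with hv
    have h := hpsd.dotProduct_mulVec_nonneg v
    have hsv : star v = v := rfl
    rw [hsv, quadForm_formula] at h
    have hvz : (fun j => v (Sum.inr (Sum.inr j))) = z := rfl
    have hvt : v (Sum.inr (Sum.inl ())) = 1 := rfl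
    rw [hvz, hvt] at h
    have hzero : ∑ i, (v (Sum.inl i) + 1 * a i + A.mulVec z i) ^ 2 = 0 :=
      Finset.sum_eq_zero fun i _ => by
        show (-(A.mulVec z i + a i) + 1 * a i + A.mulVec z i) ^ 2 = 0
        ring
    rw [hzero] at h
    have hAa : (A.mulVec z + (1:ℝ) • a) ⬝ᵥ (A.mulVec z + (1:ℝ) • a)
        = ∑ i, (A.mulVec z i + a i) ^ 2 := by
      simp only [dotProduct, Pi.add_apply, Pi.smul_apply, smul_eq_mul, one_mul]
      exact Finset.sum_congr rfl fun i _ => by ring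
    rw [hAa] at h
    have hzz : z ⬝ᵥ z = ∑ i, (z i) ^ 2 := by
      simp only [dotProduct, sq]
    have hball : z ⬝ᵥ z ≤ r ^ 2 := by rw [hzz]; exact hz
    have hlamball : 0 ≤ lam * (r ^ 2 * 1 ^ 2 - z ⬝ᵥ z) := by
      apply mul_nonneg hlam
      nlinarith [hball]
    nlinarith [h, hlamball]
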